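/- The Fréchet(1) distribution is completely subscalable: if F̄ is defined by F̄(x) = 1 − e^{−1/x} for x > 0 and F̄(x) = 1 for x ≤ 0, then θ·F̄(x) ≤ F̄(x/θ) for all x ≥ 0 and all θ ∈ (0,1). -/

import Mathlib

/-- Survival function of the Fréchet(1) distribution:
`F̄(x) = 1 - e^{-1/x}` for `x > 0` and `F̄(x) = 1` for `x ≤ 0`. -/
noncomputable def frechetSurvival (x : ℝ) : ℝ :=
  if 0 < x then 1 - Real.exp (-1 / x) else 1

/-- the Fréchet(1) distribution is completely subscalable. -/
theorem frechet_completelySubscalable :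
    ∀ θ : ℝ, θ ∈ Set.Ioo (0 : ℝ) 1 → ∀ x : ℝ, 0 ≤ x →
      θ * frechetSurvival x ≤ frechetSurvival (x / θ) := by
  rintro θ ⟨hθ0, hθ1⟩ x hx
  rcases eq_or_lt_of_le hx with h0 | hxpos
  · simp [frechetSurvival, ← h0, le_of_lt hθ1]
  · have hxθ : 0 < x / θ := div_pos hxpos hθ0
    simp only [frechetSurvival, if_pos hxpos, if_pos hxθ]
    have key : Real.exp (-1 / (x/θ)) ≤ (1 - θ) * Real.exp 0 + θ * Real.exp (-1 / x) := by
      have := convexOn_exp.2 (Set.mem_univ (0:ℝ)) (Set.mem_univ (-1/x))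
        (by linarith : (0:ℝ) ≤ 1 - θ) hθ0.le (by ring)
      have harg : (1 - θ) • (0:ℝ) + θ • (-1/x) = -1 / (x/θ) := by
        simp only [smul_eq_mul]
        field_simp
        ring
      rw [harg] at this
      simpa using this
    rw [Real.exp_zero] at key
    nlinarith [Real.exp_pos (-1/x)]
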